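/- For all m ≥ 1, l ≥ 0 with (m,l) ≠ (1,0), the number A^0_{m,l} := (-1)^{l+m-1} · m! · m^{l-1} satisfies the identity ∑_{l'=0}^{l} ∑_{p=1}^{m} C(l,l') · A^0_{p,l'} · S(m,p) · p^{l-l'} = 0, where A^0_{1,0} = 1 is included in the sum, S is the Stirling number of the second kind and C the binomial coefficient. -/

import Mathlib

/-- Stirling numbers of the second kind. -/
def stirling : ℕ → ℕ → ℕ
  | 0, 0 => 1
  | 0, _ + 1 => 0
  | _ + 1, 0 => 0
  | n + 1, k + 1 => (k + 1) * stirling n (k + 1) + stirling n k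

/-- The genus-zero Koszul hierarchy coefficient
`A^0_{m,l} = (-1)^{l+m-1} · m! · m^{l-1}`; for `m ≥ 1` this equals
`(-1)^{l+m-1} · (m-1)! · m^l`, which avoids the negative exponent when `l = 0`.
In particular `A^0_{1,0} = 1`. -/
def A0 (m l : ℕ) : ℤ :=
  (-1 : ℤ) ^ (l + m - 1) * (Nat.factorial (m - 1) : ℤ) * (m : ℤ) ^ l

lemma stirling_succ_succ (n k : ℕ) :
    stirling (n + 1) (k + 1) = (k + 1) * stirling n (k + 1) + stirling n k := rfl

lemma stirling_eq_zero_of_lt : ∀ n k, n < k → stirling n k = 0 := by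
  intro n
  induction n with
  | zero =>
    intro k hk
    cases k with
    | zero => omega
    | succ k => rfl
  | succ n ih =>
    intro k hk
    cases k with
    | zero => omega
    | succ k =>
      rw [stirling_succ_succ, ih (k + 1) (by omega), ih k (by omega)]
      simp

lemma key (k : ℕ) :
    ∑ q ∈ Finset.range (k + 2),
      (-1 : ℤ) ^ q * (Nat.factorial q : ℤ) * (stirling (k + 2) (q + 1) : ℤ) = 0 := by
  have hsplit : ∀ q ∈ Finset.range (k + 2),
      (-1 : ℤ) ^ q * (Nat.factorial q : ℤ) * (stirling (k + 2) (q + 1) : ℤ)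
      = (-1 : ℤ) ^ q * (Nat.factorial (q + 1) : ℤ) * (stirling (k + 1) (q + 1) : ℤ)
        + (-1 : ℤ) ^ q * (Nat.factorial q : ℤ) * (stirling (k + 1) q : ℤ) := by
    intro q _
    rw [stirling_succ_succ, Nat.factorial_succ]
    push_cast
    ring
  rw [Finset.sum_congr rfl hsplit, Finset.sum_add_distrib]
  have h1 : ∑ q ∈ Finset.range (k + 2),
      (-1 : ℤ) ^ q * (Nat.factorial (q + 1) : ℤ) * (stirling (k + 1) (q + 1) : ℤ)
      = ∑ q ∈ Finset.range (k + 1),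
      (-1 : ℤ) ^ q * (Nat.factorial (q + 1) : ℤ) * (stirling (k + 1) (q + 1) : ℤ) := by
    rw [Finset.sum_range_succ, stirling_eq_zero_of_lt (k + 1) (k + 2) (by omega)]
    simp
  have h2 : ∑ q ∈ Finset.range (k + 2),
      (-1 : ℤ) ^ q * (Nat.factorial q : ℤ) * (stirling (k + 1) q : ℤ)
      = ∑ q ∈ Finset.range (k + 1),
      -((-1 : ℤ) ^ q * (Nat.factorial (q + 1) : ℤ) * (stirling (k + 1) (q + 1) : ℤ)) := by
    rw [Finset.sum_range_succ']
    have h0 : (stirling (k + 1) 0 : ℤ) = 0 := by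
      cases k <;> rfl
    rw [h0]
    simp only [mul_zero, add_zero]
    refine Finset.sum_congr rfl fun i _ => ?_
    ring
  rw [h1, h2, Finset.sum_neg_distrib]
  ring

/-- For all `m ≥ 1`, `l ≥ 0` with `(m,l) ≠ (1,0)`, the coefficients `A^0` satisfy
`∑_{l'=0}^{l} ∑_{p=1}^{m} C(l,l') · A^0_{p,l'} · S(m,p) · p^{l-l'} = 0`
(the term with `(p,l') = (1,0)`, where `A^0_{1,0} = 1`, being included). -/
theorem A0_recursion (m l : ℕ) (hm : 1 ≤ m) (hml : (m, l) ≠ (1, 0)) :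
    ∑ l' ∈ Finset.range (l + 1), ∑ p ∈ Finset.Icc 1 m,
      (Nat.choose l l' : ℤ) * A0 p l' * (stirling m p : ℤ) * (p : ℤ) ^ (l - l') = 0 := by
  rcases Nat.eq_zero_or_pos l with hl | hl
  · -- the case l = 0 : reduces to ∑ (-1)^{p-1} (p-1)! S(m,p) = 0 for m ≥ 2
    subst hl
    have hm2 : 2 ≤ m := by
      rcases Nat.lt_or_ge m 2 with h | h
      · exfalso; apply hml; ext <;> simp; omega
      · exact h
    obtain ⟨k, rfl⟩ : ∃ k, m = k + 2 := ⟨m - 2, by omega⟩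
    rw [Finset.sum_range_one]
    have := key k
    rw [show Finset.Icc 1 (k + 2) = Finset.Ico 1 (k + 3) from by rw [← Finset.Ico_add_one_right_eq_Icc]; rfl,
      Finset.sum_Ico_eq_sum_range]
    have hn : k + 3 - 1 = k + 2 := by omega
    rw [hn, ← this]
    refine Finset.sum_congr rfl fun q _ => ?_
    have h1 : 1 + q = q + 1 := by omega
    rw [h1]
    unfold A0
    simp [Nat.choose]
  · -- the case l ≥ 1 : the alternating binomial sum vanishes
    rw [Finset.sum_comm]
    refine Finset.sum_eq_zero fun p hp => ?_
    have hp1 : 1 ≤ p := (Finset.mem_Icc.mp hp).1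
    have hcongr : ∀ l' ∈ Finset.range (l + 1),
        (Nat.choose l l' : ℤ) * A0 p l' * (stirling m p : ℤ) * (p : ℤ) ^ (l - l')
        = ((-1 : ℤ) ^ (p - 1) * (Nat.factorial (p - 1) : ℤ) * (stirling m p : ℤ)
            * (p : ℤ) ^ l) * ((-1 : ℤ) ^ l' * (Nat.choose l l' : ℤ)) := by
      intro l' hl'
      have hle : l' ≤ l := Nat.lt_succ_iff.mp (Finset.mem_range.mp hl')
      have hpow : (-1 : ℤ) ^ (l' + p - 1) = (-1 : ℤ) ^ l' * (-1 : ℤ) ^ (p - 1) := by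
        rw [← pow_add]; congr 1; omega
      have hppow : (p : ℤ) ^ l' * (p : ℤ) ^ (l - l') = (p : ℤ) ^ l := by
        rw [← pow_add]; congr 1; omega
      unfold A0
      rw [hpow, ← hppow]
      ring
    rw [Finset.sum_congr rfl hcongr, ← Finset.mul_sum,
      Int.alternating_sum_range_choose, if_neg (by omega), mul_zero]
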